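/- Let Z be a random variable on a probability space with 0 ≤ Z ≤ 1 almost surely, let c > 0, and define β₁, β₂ : [0,1] → ℝ by β₁(b) = 𝔼[max(b, Z)] − c and β₂(b) = 𝔼[max(b, Z, β₁(max(b, Z)))] − c. Define the threshold α by: α = 0 if β₁(0) < 0, and otherwise α is the unique point of [0,1) with β₁(α) = α. Then β₂(b) ≥ β₁(b) for every b ∈ [0,1], and β₂(b) = β₁(b) for every b ∈ [α, 1]. -/

import Mathlib

open MeasureTheory

/-- Lemma 4: with `β₁(b) = 𝔼[max(b, Z)] − c`,
`β₂(b) = 𝔼[max(b, Z, β₁(max(b, Z)))] − c`, and the SF threshold `α`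
(zero when `β₁(0) < 0`, the unique fixed point of `β₁` in `[0,1)` otherwise),
we have `β₂ ≥ β₁` on `[0,1]` and `β₂ = β₁` on `[α, 1]`. -/
theorem beta_two_ge_beta_one
    {Ω : Type*} [MeasurableSpace Ω] (μ : Measure Ω) [IsProbabilityMeasure μ]
    (Z : Ω → ℝ) (hZmeas : Measurable Z)
    (hZ01 : ∀ᵐ ω ∂μ, Z ω ∈ Set.Icc (0 : ℝ) 1)
    (c : ℝ) (hc : 0 < c)
    (β₁ β₂ : ℝ → ℝ)
    (hβ₁ : ∀ b : ℝ, β₁ b = (∫ ω, max b (Z ω) ∂μ) - c)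
    (hβ₂ : ∀ b : ℝ, β₂ b = (∫ ω, max (max b (Z ω)) (β₁ (max b (Z ω))) ∂μ) - c)
    (α : ℝ)
    (hαneg : β₁ 0 < 0 → α = 0)
    (hαpos : 0 ≤ β₁ 0 → α ∈ Set.Ico (0 : ℝ) 1 ∧ β₁ α = α) :
    (∀ b ∈ Set.Icc (0 : ℝ) 1, β₁ b ≤ β₂ b) ∧
    (∀ b ∈ Set.Icc α 1, β₂ b = β₁ b) := by
  -- integrability of max b Z
  have hIntM : ∀ b : ℝ, Integrable (fun ω => max b (Z ω)) μ := by
    intro b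
    refine Integrable.mono' (integrable_const (max |b| 1))
      (measurable_const.max hZmeas).aestronglyMeasurable ?_
    filter_upwards [hZ01] with ω hω
    have h1 : max b (Z ω) ≤ max |b| 1 :=
      max_le_max (le_abs_self b) hω.2
    have h2 : -(max |b| 1) ≤ max b (Z ω) := by
      have : -|b| ≤ b := neg_abs_le b
      have : -(max |b| 1) ≤ b := by
        have := le_max_left |b| 1; linarith
      exact this.trans (le_max_left _ _)
    rw [Real.norm_eq_abs, abs_le]
    exact ⟨h2, h1⟩
  -- monotonicity of β₁
  have hmono : Monotone β₁ := by
    intro x y hxy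
    rw [hβ₁, hβ₁]
    refine sub_le_sub_right ?_ c
    exact integral_mono (hIntM x) (hIntM y) (fun ω => max_le_max hxy le_rfl)
  -- 1-Lipschitz-type bound: x ↦ β₁ x − x is nonincreasing
  have hlip : ∀ x y : ℝ, x ≤ y → β₁ y - y ≤ β₁ x - x := by
    intro x y hxy
    have hpt : ∀ ω, max y (Z ω) ≤ max x (Z ω) + (y - x) := by
      intro ω
      refine max_le ?_ ?_
      · have := le_max_left x (Z ω); linarith
      · have := le_max_right x (Z ω); linarith
    have h1 : ∫ ω, max y (Z ω) ∂μ ≤ ∫ ω, (max x (Z ω) + (y - x)) ∂μ :=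
      integral_mono (hIntM y) ((hIntM x).add (integrable_const (y - x))) hpt
    rw [integral_add (hIntM x) (integrable_const _), integral_const,
      probReal_univ, one_smul] at h1
    rw [hβ₁, hβ₁]
    linarith
  -- key: β₁ x ≤ x for x ≥ α
  have hKey : ∀ x : ℝ, α ≤ x → β₁ x ≤ x := by
    intro x hx
    rcases lt_or_ge (β₁ 0) 0 with h | h
    · have hα0 := hαneg h
      have hx0 : (0 : ℝ) ≤ x := hα0 ▸ hx
      have := hlip 0 x hx0
      linarith
    · obtain ⟨hαIco, hfix⟩ := hαpos h
      have := hlip α x hx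
      linarith
  -- measurability of the big integrand
  have hmeasBig : ∀ b : ℝ,
      Measurable (fun ω => max (max b (Z ω)) (β₁ (max b (Z ω)))) := by
    intro b
    exact (measurable_const.max hZmeas).max
      (hmono.measurable.comp (measurable_const.max hZmeas))
  have hIntBig : ∀ b ∈ Set.Icc (0 : ℝ) 1,
      Integrable (fun ω => max (max b (Z ω)) (β₁ (max b (Z ω)))) μ := by
    intro b hb
    refine Integrable.mono' (integrable_const (max 1 (β₁ 1)))
      (hmeasBig b).aestronglyMeasurable ?_
    filter_upwards [hZ01] with ω hω
    have hM0 : (0 : ℝ) ≤ max b (Z ω) := le_trans hb.1 (le_max_left _ _)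
    have hM1 : max b (Z ω) ≤ 1 := max_le hb.2 hω.2
    have hv0 : (0 : ℝ) ≤ max (max b (Z ω)) (β₁ (max b (Z ω))) :=
      le_trans hM0 (le_max_left _ _)
    have hv1 : max (max b (Z ω)) (β₁ (max b (Z ω))) ≤ max 1 (β₁ 1) :=
      max_le_max hM1 (hmono hM1)
    rw [Real.norm_eq_abs, abs_of_nonneg hv0]
    exact hv1
  refine ⟨?_, ?_⟩
  · intro b hb
    rw [hβ₁, hβ₂]
    refine sub_le_sub_right ?_ c
    exact integral_mono (hIntM b) (hIntBig b hb) (fun ω => le_max_left _ _)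
  · intro b hb
    rw [hβ₁, hβ₂]
    congr 1
    refine integral_congr_ae ?_
    filter_upwards [hZ01] with ω hω
    have hM : α ≤ max b (Z ω) := le_trans hb.1 (le_max_left _ _)
    exact max_eq_left (hKey _ hM)
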